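/- (Theorem 4.1) Let α : ℝ → ℝ⁴ be smooth and let V₁, V₂, V₃, V₄ : ℝ → ℝ⁴ be smooth maps forming, at every σ, a linearly independent family, with continuous functions 𝒦₁, 𝒦₂, 𝒦₃ : ℝ → ℝ and signs μ₁,…,μ₅ ∈ {-1,1}, such that α' = V₁ and the equiform Frenet equations hold: V₁' = 𝒦₁V₁ + V₂, V₂' = μ₁V₁ + 𝒦₁V₂ + μ₂𝒦₂V₃, V₃' = μ₃𝒦₂V₂ + 𝒦₁V₃ + μ₄𝒦₃V₄, V₄' = μ₅𝒦₃V₃ + 𝒦₁V₄. Assume 𝒦₁(σ) ≠ 0 for all σ. Then 𝒦₂ ≡ 0 if and only if α lies fully in a 2-dimensional plane of E₁⁴, i.e. there exists a 2-dimensional linear subspace W ⊆ ℝ⁴ such that α(σ) - α(0) ∈ W for all σ. -/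

import Mathlib

noncomputable section

open Set

/-- A Grönwall-type vanishing lemma: a function with locally linearly bounded derivative
vanishing at 0 vanishes everywhere. -/
lemma zero_of_gronwall {n : ℕ} (g g' : ℝ → Fin n → ℝ)
    (hd : ∀ σ, HasDerivAt g (g' σ) σ)
    (hb : ∀ R : ℝ, 0 < R → ∃ C : ℝ, ∀ σ ∈ Set.Icc (-R) R, ‖g' σ‖ ≤ C * ‖g σ‖)
    (h0 : g 0 = 0) (σ : ℝ) : g σ = 0 := by
  have key : ∀ (h h' : ℝ → Fin n → ℝ), (∀ t, HasDerivAt h (h' t) t) →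
      (∀ R : ℝ, 0 < R → ∃ C : ℝ, ∀ t ∈ Set.Icc (-R) R, ‖h' t‖ ≤ C * ‖h t‖) → h 0 = 0 →
      ∀ t, 0 ≤ t → h t = 0 := by
    intro h h' hdh hbh h0h t ht
    obtain ⟨C, hC⟩ := hbh (t + 1) (by linarith)
    have main := norm_le_gronwallBound_of_norm_deriv_right_le (f := h) (f' := h')
      (δ := 0) (K := C) (ε := 0) (a := 0) (b := t)
      (fun x _ => ((hdh x).differentiableAt.continuousAt).continuousWithinAt)
      (fun x _ => (hdh x).hasDerivWithinAt)
      (by simp [h0h])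
      (fun x hx => by
        have hx' : x ∈ Set.Icc (-(t + 1)) (t + 1) :=
          ⟨by linarith [hx.1], by linarith [hx.2]⟩
        simpa using hC x hx')
    have := main t (Set.right_mem_Icc.mpr ht)
    simpa [gronwallBound_ε0] using this
  rcases le_or_gt 0 σ with hσ | hσ
  · exact key g g' hd hb h0 σ hσ
  · have hneg : ∀ t : ℝ, HasDerivAt (fun s => g (-s)) (-g' (-t)) t := by
      intro t
      have := (hd (-t)).scomp t (hasDerivAt_neg t)
      simpa [Function.comp_def] using this
    have := key (fun s => g (-s)) (fun s => -g' (-s)) hneg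
      (fun R hR => by
        obtain ⟨C, hC⟩ := hb R hR
        exact ⟨C, fun t ht => by
          have : -t ∈ Set.Icc (-R) R := ⟨by linarith [ht.2], by linarith [ht.1]⟩
          simpa using hC (-t) this⟩)
      (by simpa using h0) (-σ) (by linarith)
    simpa using this

/-- If a differentiable curve lies in a subspace, its derivative lies there too. -/
lemma deriv_mem_of_mem (W : Submodule ℝ (Fin 4 → ℝ)) (f : ℝ → Fin 4 → ℝ) (f' : Fin 4 → ℝ)
    (τ : ℝ) (hd : HasDerivAt f f' τ) (hf : ∀ s, f s ∈ W) : f' ∈ W := by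
  rw [← Subspace.forall_mem_dualAnnihilator_apply_eq_zero_iff]
  intro φ hφ
  set Φ := LinearMap.toContinuousLinearMap φ with hΦ
  have hco : ∀ x, Φ x = φ x := fun x => rfl
  have h1 : (fun s => Φ (f s)) = fun _ => (0 : ℝ) :=
    funext fun s => by
      rw [hco]; exact (Submodule.mem_dualAnnihilator φ).mp hφ _ (hf s)
  have h2 : HasDerivAt (fun s => Φ (f s)) (Φ f') τ :=
    Φ.hasFDerivAt.comp_hasDerivAt τ hd
  have h3 : HasDerivAt (fun s => Φ (f s)) 0 τ := by
    rw [h1]; exact hasDerivAt_const τ 0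
  have := h2.unique h3
  rw [hco] at this
  exact this

/-- The Minkowski bilinear form on ℝ⁴ with signature (-,+,+,+). -/
def B (x y : Fin 4 → ℝ) : ℝ :=
  -(x 0 * y 0) + x 1 * y 1 + x 2 * y 2 + x 3 * y 3

set_option maxHeartbeats 2000000 in
theorem spacelike_K₂_zero_iff_planar
    (α V₁ V₂ V₃ V₄ : ℝ → Fin 4 → ℝ) (K₁ K₂ K₃ : ℝ → ℝ)
    (μ₁ μ₂ μ₃ μ₄ μ₅ : ℝ)
    (hμ₁ : μ₁ = -1 ∨ μ₁ = 1) (hμ₂ : μ₂ = -1 ∨ μ₂ = 1) (hμ₃ : μ₃ = -1 ∨ μ₃ = 1)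
    (hμ₄ : μ₄ = -1 ∨ μ₄ = 1) (hμ₅ : μ₅ = -1 ∨ μ₅ = 1)
    (hα : ContDiff ℝ (⊤ : ℕ∞) α)
    (hV₁ : ContDiff ℝ (⊤ : ℕ∞) V₁) (hV₂ : ContDiff ℝ (⊤ : ℕ∞) V₂)
    (hV₃ : ContDiff ℝ (⊤ : ℕ∞) V₃) (hV₄ : ContDiff ℝ (⊤ : ℕ∞) V₄)
    (hindep : ∀ σ, LinearIndependent ℝ ![V₁ σ, V₂ σ, V₃ σ, V₄ σ])
    (hK₁c : Continuous K₁) (hK₂c : Continuous K₂) (hK₃c : Continuous K₃)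
    (hα' : ∀ σ, deriv α σ = V₁ σ)
    (hV₁' : ∀ σ, deriv V₁ σ = K₁ σ • V₁ σ + V₂ σ)
    (hV₂' : ∀ σ, deriv V₂ σ = μ₁ • V₁ σ + K₁ σ • V₂ σ + (μ₂ * K₂ σ) • V₃ σ)
    (hV₃' : ∀ σ, deriv V₃ σ = (μ₃ * K₂ σ) • V₂ σ + K₁ σ • V₃ σ + (μ₄ * K₃ σ) • V₄ σ)
    (hV₄' : ∀ σ, deriv V₄ σ = (μ₅ * K₃ σ) • V₃ σ + K₁ σ • V₄ σ)
    (hK₁ne : ∀ σ, K₁ σ ≠ 0) :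
    (∀ σ, K₂ σ = 0) ↔
      ∃ W : Submodule ℝ (Fin 4 → ℝ), Module.finrank ℝ W = 2 ∧
        ∀ σ, α σ - α 0 ∈ W := by
  have hαd : ∀ τ, HasDerivAt α (V₁ τ) τ := by
    intro τ; have := (hα.differentiable (by simp) τ).hasDerivAt; rwa [hα' τ] at this
  have hV₁d : ∀ τ, HasDerivAt V₁ (K₁ τ • V₁ τ + V₂ τ) τ := by
    intro τ; have := (hV₁.differentiable (by simp) τ).hasDerivAt; rwa [hV₁' τ] at this
  have hV₂d : ∀ τ, HasDerivAt V₂ (μ₁ • V₁ τ + K₁ τ • V₂ τ + (μ₂ * K₂ τ) • V₃ τ) τ := by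
    intro τ; have := (hV₂.differentiable (by simp) τ).hasDerivAt; rwa [hV₂' τ] at this
  have hμ₁abs : |μ₁| = 1 := by rcases hμ₁ with h | h <;> simp [h]
  constructor
  · intro hK₂
    have hli2 : LinearIndependent ℝ ![V₁ 0, V₂ 0] := by
      have h := (hindep 0).comp ![0, 1] (by decide)
      have he : (![V₁ 0, V₂ 0, V₃ 0, V₄ 0] ∘ ![0, 1]) = ![V₁ 0, V₂ 0] := by
        funext i; fin_cases i <;> rfl
      rwa [he] at h
    refine ⟨Submodule.span ℝ (Set.range ![V₁ 0, V₂ 0]), ?_, ?_⟩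
    · rw [finrank_span_eq_card hli2, Fintype.card_fin]
    · intro σ
      rw [← Subspace.forall_mem_dualAnnihilator_apply_eq_zero_iff]
      intro φ hφ
      set Φ := LinearMap.toContinuousLinearMap φ with hΦ
      have hco : ∀ x, Φ x = φ x := fun x => rfl
      have hφ1 : Φ (V₁ 0) = 0 := by
        rw [hco]
        exact (Submodule.mem_dualAnnihilator φ).mp hφ _ (Submodule.subset_span ⟨0, rfl⟩)
      have hφ2 : Φ (V₂ 0) = 0 := by
        rw [hco]
        exact (Submodule.mem_dualAnnihilator φ).mp hφ _ (Submodule.subset_span ⟨1, rfl⟩)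
      set g : ℝ → Fin 3 → ℝ :=
        fun s => ![Φ (α s - α 0), Φ (V₁ s), Φ (V₂ s)] with hg
      set g' : ℝ → Fin 3 → ℝ :=
        fun s => ![Φ (V₁ s), K₁ s * Φ (V₁ s) + Φ (V₂ s),
          μ₁ * Φ (V₁ s) + K₁ s * Φ (V₂ s)] with hg'
      have hder : ∀ s, HasDerivAt g (g' s) s := by
        intro s
        rw [hasDerivAt_pi]
        intro i
        fin_cases i
        · have h := Φ.hasFDerivAt.comp_hasDerivAt s ((hαd s).sub_const (α 0))
          show HasDerivAt (fun x => Φ (α x - α 0)) (Φ (V₁ s)) s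
          exact h
        · have h := Φ.hasFDerivAt.comp_hasDerivAt s (hV₁d s)
          show HasDerivAt (fun x => Φ (V₁ x)) (K₁ s * Φ (V₁ s) + Φ (V₂ s)) s
          have h2 : Φ (K₁ s • V₁ s + V₂ s) = K₁ s * Φ (V₁ s) + Φ (V₂ s) := by
            simp [smul_eq_mul]
          rw [← h2]; exact h
        · have h := Φ.hasFDerivAt.comp_hasDerivAt s (hV₂d s)
          show HasDerivAt (fun x => Φ (V₂ x)) (μ₁ * Φ (V₁ s) + K₁ s * Φ (V₂ s)) s
          have h2 : Φ (μ₁ • V₁ s + K₁ s • V₂ s + (μ₂ * K₂ s) • V₃ s)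
              = μ₁ * Φ (V₁ s) + K₁ s * Φ (V₂ s) := by
            simp [hK₂ s, smul_eq_mul]
          rw [← h2]; exact h
      have hbound : ∀ R : ℝ, 0 < R → ∃ C : ℝ, ∀ s ∈ Set.Icc (-R) R,
          ‖g' s‖ ≤ C * ‖g s‖ := by
        intro R hR
        obtain ⟨M, hM⟩ := (isCompact_Icc (a := -R) (b := R)).exists_bound_of_continuousOn
          hK₁c.continuousOn
        have hM0 : 0 ≤ M := le_trans (norm_nonneg _) (hM 0 ⟨by linarith, by linarith⟩)
        refine ⟨M + 2, fun s hs => ?_⟩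
        have hgnn : 0 ≤ ‖g s‖ := norm_nonneg _
        have e1 : Φ (V₁ s) = g s 1 := rfl
        have e2 : Φ (V₂ s) = g s 2 := rfl
        have n1 : |g s 1| ≤ ‖g s‖ := by
          simpa [Real.norm_eq_abs] using norm_le_pi_norm (g s) 1
        have n2 : |g s 2| ≤ ‖g s‖ := by
          simpa [Real.norm_eq_abs] using norm_le_pi_norm (g s) 2
        have hKs : |K₁ s| ≤ M := by simpa [Real.norm_eq_abs] using hM s hs
        have t1 : |K₁ s| * |g s 1| ≤ M * ‖g s‖ := mul_le_mul hKs n1 (abs_nonneg _) hM0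
        have t2 : |K₁ s| * |g s 2| ≤ M * ‖g s‖ := mul_le_mul hKs n2 (abs_nonneg _) hM0
        rw [pi_norm_le_iff_of_nonneg (by positivity)]
        intro i
        fin_cases i
        · show ‖Φ (V₁ s)‖ ≤ (M + 2) * ‖g s‖
          rw [Real.norm_eq_abs, e1]
          nlinarith [mul_nonneg hM0 hgnn]
        · show ‖K₁ s * Φ (V₁ s) + Φ (V₂ s)‖ ≤ (M + 2) * ‖g s‖
          rw [Real.norm_eq_abs, e1, e2]
          have habs : |K₁ s * g s 1 + g s 2| ≤ |K₁ s| * |g s 1| + |g s 2| :=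
            (abs_add_le _ _).trans (by rw [abs_mul])
          nlinarith
        · show ‖μ₁ * Φ (V₁ s) + K₁ s * Φ (V₂ s)‖ ≤ (M + 2) * ‖g s‖
          rw [Real.norm_eq_abs, e1, e2]
          have habs : |μ₁ * g s 1 + K₁ s * g s 2| ≤ |g s 1| + |K₁ s| * |g s 2| := by
            calc |μ₁ * g s 1 + K₁ s * g s 2| ≤ |μ₁ * g s 1| + |K₁ s * g s 2| := abs_add_le _ _
              _ = |g s 1| + |K₁ s| * |g s 2| := by rw [abs_mul, abs_mul, hμ₁abs, one_mul]
          nlinarith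
      have h00 : g 0 = 0 := by
        funext i
        fin_cases i
        · show Φ (α 0 - α 0) = 0
          simp
        · exact hφ1
        · exact hφ2
      have hz := zero_of_gronwall g g' hder hbound h00 σ
      have h : Φ (α σ - α 0) = 0 := congrFun hz 0
      exact h
  · rintro ⟨W, hW2, hmem⟩ σ
    by_contra hK2ne
    have hV1W : ∀ τ, V₁ τ ∈ W := fun τ =>
      deriv_mem_of_mem W (fun s => α s - α 0) (V₁ τ) τ ((hαd τ).sub_const (α 0)) hmem
    have hV2W : ∀ τ, V₂ τ ∈ W := by
      intro τ
      have h := deriv_mem_of_mem W V₁ _ τ (hV₁d τ) hV1W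
      have := W.sub_mem h (W.smul_mem (K₁ τ) (hV1W τ))
      simpa using this
    have hV3W : V₃ σ ∈ W := by
      have h := deriv_mem_of_mem W V₂ _ σ (hV₂d σ) hV2W
      have h2 : (μ₂ * K₂ σ) • V₃ σ ∈ W := by
        have := W.sub_mem (W.sub_mem h (W.smul_mem (K₁ σ) (hV2W σ)))
          (W.smul_mem μ₁ (hV1W σ))
        have he : μ₁ • V₁ σ + K₁ σ • V₂ σ + (μ₂ * K₂ σ) • V₃ σ - K₁ σ • V₂ σ -
            μ₁ • V₁ σ = (μ₂ * K₂ σ) • V₃ σ := by module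
        rwa [he] at this
      have hμ₂ne : μ₂ ≠ 0 := by rcases hμ₂ with h' | h' <;> simp [h']
      exact (W.smul_mem_iff (mul_ne_zero hμ₂ne hK2ne)).mp h2
    have hli3 : LinearIndependent ℝ ![V₁ σ, V₂ σ, V₃ σ] := by
      have h := (hindep σ).comp ![0, 1, 2] (by decide)
      have he : (![V₁ σ, V₂ σ, V₃ σ, V₄ σ] ∘ ![0, 1, 2]) = ![V₁ σ, V₂ σ, V₃ σ] := by
        funext i; fin_cases i <;> rfl
      rwa [he] at h
    have hle : Submodule.span ℝ (Set.range ![V₁ σ, V₂ σ, V₃ σ]) ≤ W := by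
      rw [Submodule.span_le]
      rintro x ⟨i, rfl⟩
      fin_cases i
      · exact hV1W σ
      · exact hV2W σ
      · exact hV3W
    have h3 : (3 : ℕ) ≤ Module.finrank ℝ W := by
      have := Submodule.finrank_mono hle
      rwa [finrank_span_eq_card hli3, Fintype.card_fin] at this
    omega
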